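/- Let ∇ be a symmetric affine connection on (0,∞)×(0,2π)×(0,π) with coordinates (x¹,x²,x³)=(r,φ,ϑ), whose components satisfy the invariance equation −(∂ξ^i/∂x^m)∇^m_{jk} + (∂ξ^m/∂x^j)∇^i_{mk} + (∂ξ^m/∂x^k)∇^i_{jm} + (∂∇^i_{jk}/∂x^m)ξ^m + ∂²ξ^i/∂x^j∂x^k = 0 for all three rotation generators ξ. Then ∇^1_{12} = ∇^1_{13} = ∇^2_{11} = ∇^2_{22} = ∇^2_{23} = ∇^3_{11} = ∇^3_{22} = ∇^3_{33} = 0, the components ∇^1_{11}, ∇^1_{22}, ∇^2_{12} depend only on r, ∇^1_{33}(r,ϑ) = sin²ϑ · ∇^1_{22}(r), ∇^2_{33}(ϑ) = −sin ϑ cos ϑ, ∇^3_{23}(ϑ) = cot ϑ, ∇^3_{13} = ∇^2_{12}, and there is a function A(r) with ∇^2_{13} = A(r) sin ϑ and ∇^3_{12} = −A(r)/sin ϑ. -/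

import Mathlib

open scoped BigOperators
open Real

/-- Partial derivative of a real function on `ℝ³` in the `j`-th coordinate direction. -/
noncomputable def pd (f : (Fin 3 → ℝ) → ℝ) (j : Fin 3) (x : Fin 3 → ℝ) : ℝ :=
  fderiv ℝ f x (Pi.single j 1)

/-- The open box `(0,∞) × (0,π) × (0,2π)` in `(r, ϑ, φ)`-space (coordinates indexed so
that `x¹ = r`, `x² = ϑ`, `x³ = φ`, following the paper's component labels). -/
def sphDom : Set (Fin 3 → ℝ) :=
  {p | 0 < p 0 ∧ p 1 ∈ Set.Ioo 0 Real.pi ∧ p 2 ∈ Set.Ioo 0 (2 * Real.pi)}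

noncomputable def proj3 (i : Fin 3) : (Fin 3 → ℝ) →L[ℝ] ℝ := ContinuousLinearMap.proj i

lemma hasFDerivAt_coord (i : Fin 3) (p : Fin 3 → ℝ) :
    HasFDerivAt (fun q : Fin 3 → ℝ => q i) (proj3 i) p :=
  (proj3 i).hasFDerivAt (x := p)

lemma pd_of_hasFDerivAt {f : (Fin 3 → ℝ) → ℝ} {L : (Fin 3 → ℝ) →L[ℝ] ℝ} {p : Fin 3 → ℝ}
    (h : HasFDerivAt f L p) (j : Fin 3) : pd f j p = L (Pi.single j 1) := by
  rw [pd, h.fderiv]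

@[simp] lemma pd_constFn (c : ℝ) (j : Fin 3) (p : Fin 3 → ℝ) : pd (fun _ => c) j p = 0 := by
  simp [pd, fderiv_const]

lemma pd_congr {f g : (Fin 3 → ℝ) → ℝ} {p : Fin 3 → ℝ} (h : f =ᶠ[nhds p] g) (j : Fin 3) :
    pd f j p = pd g j p := by
  unfold pd; rw [h.fderiv_eq]

lemma hasFDerivAt_mul12 {u v : ℝ → ℝ} {a b : ℝ} {p : Fin 3 → ℝ}
    (hu : HasDerivAt u a (p 1)) (hv : HasDerivAt v b (p 2)) :
    HasFDerivAt (fun q : Fin 3 → ℝ => u (q 1) * v (q 2))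
      ((v (p 2) * a) • proj3 1 + (u (p 1) * b) • proj3 2) p := by
  have h1 : HasFDerivAt (fun q : Fin 3 → ℝ => u (q 1)) (a • (proj3 1 : (Fin 3 → ℝ) →L[ℝ] ℝ)) p :=
    hu.comp_hasFDerivAt p (hasFDerivAt_coord 1 p)
  have h2 : HasFDerivAt (fun q : Fin 3 → ℝ => v (q 2)) (b • (proj3 2 : (Fin 3 → ℝ) →L[ℝ] ℝ)) p :=
    hv.comp_hasFDerivAt p (hasFDerivAt_coord 2 p)
  have := h1.fun_mul h2
  refine this.congr_fderiv ?_
  ext w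
  simp [proj3]
  ring

lemma pd_mul12 {u v : ℝ → ℝ} {a b : ℝ} {p : Fin 3 → ℝ}
    (hu : HasDerivAt u a (p 1)) (hv : HasDerivAt v b (p 2)) (j : Fin 3) :
    pd (fun q : Fin 3 → ℝ => u (q 1) * v (q 2)) j p =
      (if j = 1 then v (p 2) * a else 0) + (if j = 2 then u (p 1) * b else 0) := by
  rw [pd_of_hasFDerivAt (hasFDerivAt_mul12 hu hv)]
  fin_cases j <;> simp [proj3, Pi.single_apply]

lemma hasFDerivAt_comp2 {v : ℝ → ℝ} {b : ℝ} {p : Fin 3 → ℝ} (hv : HasDerivAt v b (p 2)) :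
    HasFDerivAt (fun q : Fin 3 → ℝ => v (q 2)) (b • (proj3 2 : (Fin 3 → ℝ) →L[ℝ] ℝ)) p :=
  hv.comp_hasFDerivAt p (hasFDerivAt_coord 2 p)

lemma pd_comp2 {v : ℝ → ℝ} {b : ℝ} {p : Fin 3 → ℝ} (hv : HasDerivAt v b (p 2)) (j : Fin 3) :
    pd (fun q : Fin 3 → ℝ => v (q 2)) j p = if j = 2 then b else 0 := by
  rw [pd_of_hasFDerivAt (hasFDerivAt_comp2 hv)]
  fin_cases j <;> simp [proj3, Pi.single_apply]

lemma hasDerivAt_negcot (x : ℝ) (h : Real.sin x ≠ 0) :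
    HasDerivAt (fun y => -(Real.cos y / Real.sin y)) ((Real.sin x ^ 2)⁻¹) x := by
  have h2 := ((Real.hasDerivAt_cos x).fun_div (Real.hasDerivAt_sin x) h).fun_neg
  refine h2.congr_deriv ?_
  have hpy : Real.sin x ^ 2 + Real.cos x ^ 2 = 1 := Real.sin_sq_add_cos_sq x
  field_simp
  nlinarith [hpy]

lemma hasDerivAt_invsin2 (x : ℝ) (h : Real.sin x ≠ 0) :
    HasDerivAt (fun y => (Real.sin y ^ 2)⁻¹) (-2 * Real.cos x / Real.sin x ^ 3) x := by
  have h2 := ((Real.hasDerivAt_sin x).fun_pow 2).fun_inv (pow_ne_zero 2 h)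
  refine h2.congr_deriv ?_
  field_simp
  ring

@[simp] lemma pd_cos2 (m : Fin 3) (q : Fin 3 → ℝ) :
    pd (fun y : Fin 3 → ℝ => Real.cos (y 2)) m q = if m = 2 then -Real.sin (q 2) else 0 :=
  pd_comp2 (Real.hasDerivAt_cos _) m

@[simp] lemma pd_negsin2 (m : Fin 3) (q : Fin 3 → ℝ) :
    pd (fun y : Fin 3 → ℝ => -Real.sin (y 2)) m q = if m = 2 then -Real.cos (q 2) else 0 :=
  pd_comp2 ((Real.hasDerivAt_sin _).neg) m

@[simp] lemma pd_negcos2 (m : Fin 3) (q : Fin 3 → ℝ) :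
    pd (fun y : Fin 3 → ℝ => -Real.cos (y 2)) m q = if m = 2 then Real.sin (q 2) else 0 := by
  have : HasDerivAt (fun y : ℝ => -Real.cos y) (Real.sin (q 2)) (q 2) := by
    simpa using (Real.hasDerivAt_cos (q 2)).fun_neg
  exact pd_comp2 this m

lemma pd_lam2 (q : Fin 3 → ℝ) (h : Real.sin (q 1) ≠ 0) (m : Fin 3) :
    pd (fun y : Fin 3 → ℝ => -(Real.cos (y 1) / Real.sin (y 1)) * Real.sin (y 2)) m q =
      (if m = 1 then Real.sin (q 2) * (Real.sin (q 1) ^ 2)⁻¹ else 0)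
      + (if m = 2 then -(Real.cos (q 1) / Real.sin (q 1)) * Real.cos (q 2) else 0) :=
  pd_mul12 (hasDerivAt_negcot _ h) (Real.hasDerivAt_sin _) m

lemma pd_zet2 (q : Fin 3 → ℝ) (h : Real.sin (q 1) ≠ 0) (m : Fin 3) :
    pd (fun y : Fin 3 → ℝ => -(Real.cos (y 1) / Real.sin (y 1)) * Real.cos (y 2)) m q =
      (if m = 1 then Real.cos (q 2) * (Real.sin (q 1) ^ 2)⁻¹ else 0)
      + (if m = 2 then -(Real.cos (q 1) / Real.sin (q 1)) * -Real.sin (q 2) else 0) := by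
  have := pd_mul12 (hasDerivAt_negcot _ h) (Real.hasDerivAt_cos (q 2)) m
  simpa using this

lemma pd_invsin2sin (q : Fin 3 → ℝ) (h : Real.sin (q 1) ≠ 0) (m : Fin 3) :
    pd (fun y : Fin 3 → ℝ => (Real.sin (y 1) ^ 2)⁻¹ * Real.sin (y 2)) m q =
      (if m = 1 then Real.sin (q 2) * (-2 * Real.cos (q 1) / Real.sin (q 1) ^ 3) else 0)
      + (if m = 2 then (Real.sin (q 1) ^ 2)⁻¹ * Real.cos (q 2) else 0) :=
  pd_mul12 (hasDerivAt_invsin2 _ h) (Real.hasDerivAt_sin _) m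

lemma Umem {p : Fin 3 → ℝ} (h : Real.sin (p 1) ≠ 0) :
    {q : Fin 3 → ℝ | Real.sin (q 1) ≠ 0} ∈ nhds p := by
  have hopen : IsOpen {q : Fin 3 → ℝ | Real.sin (q 1) ≠ 0} :=
    IsOpen.preimage (Real.continuous_sin.comp (continuous_apply 1)) isOpen_ne
  exact hopen.mem_nhds h

lemma sd_lam2_0 (p : Fin 3 → ℝ) (h : Real.sin (p 1) ≠ 0) (j : Fin 3) :
    pd (fun q => pd (fun y : Fin 3 → ℝ =>
        -(Real.cos (y 1) / Real.sin (y 1)) * Real.sin (y 2)) 0 q) j p = 0 := by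
  have hev : (fun q => pd (fun y : Fin 3 → ℝ =>
      -(Real.cos (y 1) / Real.sin (y 1)) * Real.sin (y 2)) 0 q)
      =ᶠ[nhds p] (fun _ => (0:ℝ)) :=
    Filter.eventuallyEq_of_mem (Umem h) (fun q hq => by rw [pd_lam2 q hq]; simp)
  rw [pd_congr hev j, pd_constFn]

lemma sd_lam2_1 (p : Fin 3 → ℝ) (h : Real.sin (p 1) ≠ 0) (j : Fin 3) :
    pd (fun q => pd (fun y : Fin 3 → ℝ =>
        -(Real.cos (y 1) / Real.sin (y 1)) * Real.sin (y 2)) 1 q) j p =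
      (if j = 1 then Real.sin (p 2) * (-2 * Real.cos (p 1) / Real.sin (p 1) ^ 3) else 0)
      + (if j = 2 then (Real.sin (p 1) ^ 2)⁻¹ * Real.cos (p 2) else 0) := by
  have hev : (fun q => pd (fun y : Fin 3 → ℝ =>
      -(Real.cos (y 1) / Real.sin (y 1)) * Real.sin (y 2)) 1 q)
      =ᶠ[nhds p] (fun q => (Real.sin (q 1) ^ 2)⁻¹ * Real.sin (q 2)) :=
    Filter.eventuallyEq_of_mem (Umem h) (fun q hq => by
      rw [pd_lam2 q hq]; simp [mul_comm])
  rw [pd_congr hev j]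
  exact pd_invsin2sin p h j

lemma sd_lam2_2 (p : Fin 3 → ℝ) (h : Real.sin (p 1) ≠ 0) (j : Fin 3) :
    pd (fun q => pd (fun y : Fin 3 → ℝ =>
        -(Real.cos (y 1) / Real.sin (y 1)) * Real.sin (y 2)) 2 q) j p =
      (if j = 1 then Real.cos (p 2) * (Real.sin (p 1) ^ 2)⁻¹ else 0)
      + (if j = 2 then -(Real.cos (p 1) / Real.sin (p 1)) * -Real.sin (p 2) else 0) := by
  have hev : (fun q => pd (fun y : Fin 3 → ℝ =>
      -(Real.cos (y 1) / Real.sin (y 1)) * Real.sin (y 2)) 2 q)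
      =ᶠ[nhds p] (fun q => -(Real.cos (q 1) / Real.sin (q 1)) * Real.cos (q 2)) :=
    Filter.eventuallyEq_of_mem (Umem h) (fun q hq => by rw [pd_lam2 q hq]; simp)
  rw [pd_congr hev j]
  exact pd_zet2 p h j

lemma convex_sphDom : Convex ℝ sphDom := by
  have h0 : Convex ℝ ((fun p : Fin 3 → ℝ => p 0) ⁻¹' Set.Ioi (0:ℝ)) :=
    (convex_Ioi (0:ℝ)).linear_preimage (LinearMap.proj (R := ℝ) (φ := fun _ : Fin 3 => ℝ) 0)
  have h1 : Convex ℝ ((fun p : Fin 3 → ℝ => p 1) ⁻¹' Set.Ioo 0 Real.pi) :=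
    (convex_Ioo 0 Real.pi).linear_preimage (LinearMap.proj (R := ℝ) (φ := fun _ : Fin 3 => ℝ) 1)
  have h2 : Convex ℝ ((fun p : Fin 3 → ℝ => p 2) ⁻¹' Set.Ioo 0 (2*Real.pi)) :=
    (convex_Ioo 0 (2*Real.pi)).linear_preimage (LinearMap.proj (R := ℝ) (φ := fun _ : Fin 3 => ℝ) 2)
  have : sphDom = ((fun p : Fin 3 → ℝ => p 0) ⁻¹' Set.Ioi (0:ℝ))
      ∩ (((fun p : Fin 3 → ℝ => p 1) ⁻¹' Set.Ioo 0 Real.pi)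
      ∩ ((fun p : Fin 3 → ℝ => p 2) ⁻¹' Set.Ioo 0 (2*Real.pi))) := rfl
  rw [this]
  exact h0.inter (h1.inter h2)

lemma isOpen_sphDom : IsOpen sphDom := by
  have h0 : IsOpen ((fun p : Fin 3 → ℝ => p 0) ⁻¹' Set.Ioi (0:ℝ)) :=
    IsOpen.preimage (continuous_apply 0) isOpen_Ioi
  have h1 : IsOpen ((fun p : Fin 3 → ℝ => p 1) ⁻¹' Set.Ioo 0 Real.pi) :=
    IsOpen.preimage (continuous_apply 1) isOpen_Ioo
  have h2 : IsOpen ((fun p : Fin 3 → ℝ => p 2) ⁻¹' Set.Ioo 0 (2*Real.pi)) :=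
    IsOpen.preimage (continuous_apply 2) isOpen_Ioo
  have : sphDom = ((fun p : Fin 3 → ℝ => p 0) ⁻¹' Set.Ioi (0:ℝ))
      ∩ (((fun p : Fin 3 → ℝ => p 1) ⁻¹' Set.Ioo 0 Real.pi)
      ∩ ((fun p : Fin 3 → ℝ => p 2) ⁻¹' Set.Ioo 0 (2*Real.pi))) := rfl
  rw [this]
  exact h0.inter (h1.inter h2)

/-- If `f` has vanishing `d`-th partial derivative at every domain point agreeing with `p`
off coordinate `d`, then `f p = f q` whenever `q` agrees with `p` off coordinate `d`. -/
lemma const_coord (f : (Fin 3 → ℝ) → ℝ) (d : Fin 3) {p q : Fin 3 → ℝ}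
    (hd : ∀ x ∈ sphDom, (∀ i, i ≠ d → x i = p i) → DifferentiableAt ℝ f x)
    (h0 : ∀ x ∈ sphDom, (∀ i, i ≠ d → x i = p i) → pd f d x = 0)
    (hp : p ∈ sphDom) (hq : q ∈ sphDom)
    (hco : ∀ i, i ≠ d → p i = q i) : f p = f q := by
  set γ : ℝ → (Fin 3 → ℝ) := fun t => p + (t - p d) • (Pi.single d (1:ℝ) : Fin 3 → ℝ) with hγ
  have hγco : ∀ t, ∀ i, i ≠ d → γ t i = p i := by
    intro t i hi
    simp [hγ, Pi.single_apply, hi]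
  have hγd : ∀ t, γ t d = t := by
    intro t; simp [hγ, Pi.single_apply]
  have hγp : γ (p d) = p := by
    funext i; by_cases hi : i = d
    · subst hi; exact hγd _
    · exact hγco _ _ hi
  have hγq : γ (q d) = q := by
    funext i; by_cases hi : i = d
    · subst hi; rw [hγd]
    · rw [hγco _ _ hi]; exact hco i hi
  have hγder : ∀ t, HasDerivAt γ (Pi.single d 1) t := by
    intro t
    have h1 : HasDerivAt (fun t : ℝ => t - p d) 1 t := (hasDerivAt_id t).sub_const _
    have h2 := h1.smul_const (Pi.single d 1 : Fin 3 → ℝ)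
    have h3 := h2.const_add p
    simpa [hγ] using h3
  set s : Set ℝ := γ ⁻¹' sphDom with hs
  have hconv : Convex ℝ s := by
    intro x hx y hy a b ha hb hab
    have hkey : γ (a • x + b • y) = a • γ x + b • γ y := by
      funext i
      simp only [hγ, Pi.add_apply, Pi.smul_apply, smul_eq_mul, Pi.single_apply]
      by_cases hi : i = d
      · subst hi
        simp
      · simp [hi]
        linear_combination (-(p i)) * hab
    show γ (a • x + b • y) ∈ sphDom
    rw [hkey]
    exact convex_sphDom hx hy ha hb hab
  have hγcont : Continuous γ := by
    apply continuous_const.add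
    exact (continuous_id.sub continuous_const).smul continuous_const
  have hop : IsOpen s := isOpen_sphDom.preimage hγcont
  have hgdiff : DifferentiableOn ℝ (f ∘ γ) s := by
    intro t ht
    exact ((hd (γ t) ht (hγco t)).comp t (hγder t).differentiableAt).differentiableWithinAt
  have hzero : ∀ t ∈ s, fderivWithin ℝ (f ∘ γ) s t = 0 := by
    intro t ht
    have hD : HasDerivAt (f ∘ γ) (fderiv ℝ f (γ t) (Pi.single d 1)) t :=
      (hd (γ t) ht (hγco t)).hasFDerivAt.comp_hasDerivAt t (hγder t)
    have hz : fderiv ℝ f (γ t) (Pi.single d 1) = 0 := h0 (γ t) ht (hγco t)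
    rw [hz] at hD
    rw [fderivWithin_of_isOpen hop ht, hD.hasFDerivAt.fderiv]
    ext
    simp
  have hps : p d ∈ s := by show γ (p d) ∈ sphDom; rw [hγp]; exact hp
  have hqs : q d ∈ s := by show γ (q d) ∈ sphDom; rw [hγq]; exact hq
  have := hconv.is_const_of_fderivWithin_eq_zero hgdiff hzero hps hqs
  simpa [Function.comp, hγp, hγq] using this

lemma pd_comp1 {v : ℝ → ℝ} {b : ℝ} {p : Fin 3 → ℝ} (hv : HasDerivAt v b (p 1)) (j : Fin 3) :
    pd (fun q : Fin 3 → ℝ => v (q 1)) j p = if j = 1 then b else 0 := by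
  have h : HasFDerivAt (fun q : Fin 3 → ℝ => v (q 1)) (b • (proj3 1 : (Fin 3 → ℝ) →L[ℝ] ℝ)) p :=
    hv.comp_hasFDerivAt p (hasFDerivAt_coord 1 p)
  rw [pd_of_hasFDerivAt h]
  fin_cases j <;> simp [proj3, Pi.single_apply]

lemma pd_mul {f g : (Fin 3 → ℝ) → ℝ} {p : Fin 3 → ℝ}
    (hf : DifferentiableAt ℝ f p) (hg : DifferentiableAt ℝ g p) (j : Fin 3) :
    pd (fun q => f q * g q) j p = f p * pd g j p + g p * pd f j p := by
  unfold pd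
  rw [fderiv_fun_mul hf hg]
  simp

lemma diff_coord1 (p : Fin 3 → ℝ) : DifferentiableAt ℝ (fun q : Fin 3 → ℝ => q 1) p :=
  (hasFDerivAt_coord 1 p).differentiableAt

lemma mem_mk {r θ φ : ℝ} (hr : 0 < r) (hθ : θ ∈ Set.Ioo 0 Real.pi)
    (hφ : φ ∈ Set.Ioo 0 (2*Real.pi)) : (![r, θ, φ] : Fin 3 → ℝ) ∈ sphDom :=
  ⟨by simpa using hr, by simpa using hθ, by simpa using hφ⟩

/-- The invariance equation (vanishing Lie derivative) for an affine connection with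
components `Γ` along a vector field `ξ`:
`−(∂ξ^i/∂x^m)∇^m_{jk} + (∂ξ^m/∂x^j)∇^i_{mk} + (∂ξ^m/∂x^k)∇^i_{jm}
  + (∂∇^i_{jk}/∂x^m)ξ^m + ∂²ξ^i/∂x^j∂x^k = 0`. -/
def InvarEq (Γ : (Fin 3 → ℝ) → Fin 3 → Fin 3 → Fin 3 → ℝ)
    (ξ : (Fin 3 → ℝ) → (Fin 3 → ℝ)) : Prop :=
  ∀ p ∈ sphDom, ∀ i j k : Fin 3,
    (-(∑ m, pd (fun q => ξ q i) m p * Γ p m j k))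
      + (∑ m, pd (fun q => ξ q m) j p * Γ p i m k)
      + (∑ m, pd (fun q => ξ q m) k p * Γ p i j m)
      + (∑ m, pd (fun q => Γ q i j k) m p * ξ p m)
      + pd (fun q => pd (fun y => ξ y i) k q) j p = 0

set_option maxHeartbeats 1000000 in
/-- every symmetric affine connection on the spherical-coordinate chart
invariant under all three rotation generators `ξ = ∂/∂φ`,
`ζ = −sin φ ∂/∂ϑ − cot ϑ cos φ ∂/∂φ`, `λ = cos φ ∂/∂ϑ − cot ϑ sin φ ∂/∂φ` has the
components of Lemma 10:  `∇^1_{12} = ∇^1_{13} = ∇^2_{11} = ∇^2_{22} = ∇^2_{23} = ∇^3_{11}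
= ∇^3_{22} = ∇^3_{33} = 0`, `∇^1_{11}, ∇^1_{22}, ∇^2_{12}` depend only on `r`,
`∇^1_{33} = sin²ϑ·∇^1_{22}`, `∇^2_{33} = −sin ϑ cos ϑ`, `∇^3_{23} = cot ϑ`,
`∇^3_{13} = ∇^2_{12}`, and `∇^2_{13} = A(r) sin ϑ`, `∇^3_{12} = −A(r)/sin ϑ` for some
function `A`.  (Indices `0,1,2` correspond to `(r,ϑ,φ)`.) -/
theorem invariant_connection_form
    (Γ : (Fin 3 → ℝ) → Fin 3 → Fin 3 → Fin 3 → ℝ)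
    (hsymm : ∀ p ∈ sphDom, ∀ i j k : Fin 3, Γ p i j k = Γ p i k j)
    (hdiff : ∀ i j k, ∀ p ∈ sphDom, DifferentiableAt ℝ (fun q => Γ q i j k) p)
    (hξ : InvarEq Γ fun _ => ![0, 0, 1])
    (hζ : InvarEq Γ fun p =>
      ![0, -Real.sin (p 2), -(Real.cos (p 1) / Real.sin (p 1)) * Real.cos (p 2)])
    (hlam : InvarEq Γ fun p =>
      ![0, Real.cos (p 2), -(Real.cos (p 1) / Real.sin (p 1)) * Real.sin (p 2)]) :
    ∃ A111 A122 A212 A : ℝ → ℝ, ∀ p ∈ sphDom,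
      Γ p 0 0 1 = 0 ∧ Γ p 0 0 2 = 0 ∧ Γ p 1 0 0 = 0 ∧ Γ p 1 1 1 = 0 ∧ Γ p 1 1 2 = 0 ∧
      Γ p 2 0 0 = 0 ∧ Γ p 2 1 1 = 0 ∧ Γ p 2 2 2 = 0 ∧
      Γ p 0 0 0 = A111 (p 0) ∧ Γ p 0 1 1 = A122 (p 0) ∧ Γ p 1 0 1 = A212 (p 0) ∧
      Γ p 0 2 2 = Real.sin (p 1) ^ 2 * A122 (p 0) ∧
      Γ p 1 2 2 = -(Real.sin (p 1) * Real.cos (p 1)) ∧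
      Γ p 2 1 2 = Real.cos (p 1) / Real.sin (p 1) ∧
      Γ p 2 0 2 = A212 (p 0) ∧
      Γ p 1 0 2 = A (p 0) * Real.sin (p 1) ∧
      Γ p 2 0 1 = -(A (p 0) / Real.sin (p 1)) := by
  have hπ := Real.pi_pos
  have hhθ : Real.pi/2 ∈ Set.Ioo (0:ℝ) Real.pi := ⟨by linarith, by linarith⟩
  have hhφ : Real.pi/2 ∈ Set.Ioo (0:ℝ) (2*Real.pi) := ⟨by linarith, by linarith⟩
  -- φ-derivative vanishes
  have hpd2 : ∀ p ∈ sphDom, ∀ i j k : Fin 3, pd (fun q => Γ q i j k) 2 p = 0 := by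
    intro p hp i j k
    have h := hξ p hp i j k
    simp only [Fin.sum_univ_three, pd_constFn, Matrix.cons_val_zero, Matrix.cons_val_one,
      Matrix.head_cons, Matrix.cons_val_two, Matrix.tail_cons] at h
    linarith
  -- φ-independence
  have hφconst : ∀ (i j k : Fin 3) (p : Fin 3 → ℝ), p ∈ sphDom →
      Γ p i j k = Γ ![p 0, p 1, Real.pi/2] i j k := by
    intro i j k p hp
    have hq : (![p 0, p 1, Real.pi/2] : Fin 3 → ℝ) ∈ sphDom := mem_mk hp.1 hp.2.1 hhφ
    refine const_coord (fun q => Γ q i j k) 2 (fun x hx _ => hdiff i j k x hx)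
      (fun x hx _ => hpd2 x hx i j k) hp hq ?_
    intro l hl
    fin_cases l
    · simp
    · simp
    · exact absurd (by decide) hl
  -- slice algebraic facts
  have hslice : ∀ p, p ∈ sphDom → p 2 = Real.pi/2 →
      Γ p 0 0 1 = 0 ∧ Γ p 0 0 2 = 0 ∧ Γ p 1 0 0 = 0 ∧ Γ p 1 1 1 = 0 ∧ Γ p 1 1 2 = 0 ∧
      Γ p 2 0 0 = 0 ∧ Γ p 2 1 1 = 0 ∧ Γ p 2 2 2 = 0 ∧
      Γ p 0 2 2 = Real.sin (p 1)^2 * Γ p 0 1 1 ∧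
      Γ p 1 2 2 = -(Real.sin (p 1) * Real.cos (p 1)) ∧
      Γ p 2 1 2 = Real.cos (p 1) / Real.sin (p 1) ∧
      Γ p 2 0 2 = Γ p 1 0 1 ∧
      Γ p 2 0 1 = -(Γ p 1 0 2 / Real.sin (p 1)^2) := by
    intro p hp h2
    have hs1 : Real.sin (p 1) ≠ 0 := ne_of_gt (Real.sin_pos_of_pos_of_lt_pi hp.2.1.1 hp.2.1.2)
    have hss : Real.sin (p 1)^2 ≠ 0 := pow_ne_zero 2 hs1
    have hL001 := hlam p hp 0 0 1
    have hL002 := hlam p hp 0 0 2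
    have hL012 := hlam p hp 0 1 2
    have hL100 := hlam p hp 1 0 0
    have hL101 := hlam p hp 1 0 1
    have hL102 := hlam p hp 1 0 2
    have hL111 := hlam p hp 1 1 1
    have hL112 := hlam p hp 1 1 2
    have hL122 := hlam p hp 1 2 2
    have hL200 := hlam p hp 2 0 0
    have hL211 := hlam p hp 2 1 1
    have hL212 := hlam p hp 2 1 2
    have hL222 := hlam p hp 2 2 2
    simp only [Fin.sum_univ_three, Matrix.cons_val_zero, Matrix.cons_val_one,
      Matrix.head_cons, Matrix.cons_val_two, Matrix.tail_cons] at hL001 hL002 hL012 hL100 hL101 hL102 hL111 hL112 hL122 hL200 hL211 hL212 hL222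
    simp only [pd_constFn, pd_cos2, pd_negsin2, pd_negcos2, pd_lam2 p hs1, pd_zet2 p hs1,
      sd_lam2_0 p hs1, sd_lam2_1 p hs1, sd_lam2_2 p hs1, pd_invsin2sin p hs1,
      hpd2 p hp] at hL001 hL002 hL012 hL100 hL101 hL102 hL111 hL112 hL122 hL200 hL211 hL212 hL222
    rw [h2] at hL001 hL002 hL012 hL100 hL101 hL102 hL111 hL112 hL122 hL200 hL211 hL212 hL222
    simp [h2] at hL001 hL002 hL012 hL100 hL101 hL102 hL111 hL112 hL122 hL200 hL211 hL212 hL222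
    replace hL001 := hL001.resolve_left hs1
    replace hL200 := hL200.resolve_left hs1
    have hsym121 : Γ p 1 2 1 = Γ p 1 1 2 := hsymm p hp 1 2 1
    have hsym221 : Γ p 2 2 1 = Γ p 2 1 2 := hsymm p hp 2 2 1
    rw [hsym121] at hL111 hL122
    rw [hsym221] at hL211 hL222
    field_simp at hL012 hL101 hL111 hL112 hL122 hL211 hL212 hL222
    -- solve the linear system
    have hv2 : Γ p 1 1 2 = 0 := by
      have h0 : Γ p 1 1 2 * (3 * Real.sin (p 1) ^ 2) = 0 := by
        linear_combination Real.sin (p 1)^2 * hL212 - Real.sin (p 1)^2 * hL122 + Real.sin (p 1)^2 * hL111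
      rcases mul_eq_zero.mp h0 with h | h
      · exact h
      · exact absurd (by linarith) hss
    have hw1 : Γ p 2 1 1 = 0 := by
      have h0 : Γ p 2 1 1 * Real.sin (p 1) ^ 2 = 0 := by
        linear_combination hL111 - 2 * hv2
      rcases mul_eq_zero.mp h0 with h | h
      · exact h
      · exact absurd h hss
    have hw3 : Γ p 2 2 2 = 0 := by linear_combination hL122 + 2 * hv2
    have hw2s : Γ p 2 1 2 * Real.sin (p 1) = Real.cos (p 1) := by
      have h0 : (Γ p 2 1 2 * Real.sin (p 1) - Real.cos (p 1)) * (3 * Real.sin (p 1) ^ 6) = 0 := by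
        linear_combination Real.sin (p 1)^6 * hL211 - Real.sin (p 1)^5 * hL112 - Real.sin (p 1)^5 * hL222
      rcases mul_eq_zero.mp h0 with h | h
      · linarith
      · exact absurd (by nlinarith [pow_ne_zero 6 hs1]) (pow_ne_zero 6 hs1)
    have hv1 : Γ p 1 1 1 = 0 := by
      have h0 : Γ p 1 1 1 * Real.sin (p 1) ^ 7 = 0 := by
        linear_combination (-Real.sin (p 1)^6) * hL211 + 2 * Real.sin (p 1)^6 * hw2s
      rcases mul_eq_zero.mp h0 with h | h
      · exact h
      · exact absurd h (pow_ne_zero 7 hs1)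
    have hv3 : Γ p 1 2 2 = -(Real.sin (p 1) * Real.cos (p 1)) := by
      linear_combination hL112 + Real.sin (p 1)^2 * hv1 - Real.sin (p 1) * hw2s
    refine ⟨hL002, hL001, hL200, hv1, hv2, hL100, hw1, hw3, ?_, hv3, ?_, ?_, ?_⟩
    · linear_combination hL012
    · rw [eq_div_iff hs1]; linarith
    · linear_combination hL102
    · field_simp
      linarith [hL101]
  -- slice derivative facts from ζ
  have hZfacts : ∀ p, p ∈ sphDom → p 2 = Real.pi/2 →
      pd (fun q => Γ q 0 0 0) 1 p = 0 ∧ pd (fun q => Γ q 0 1 1) 1 p = 0 ∧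
      pd (fun q => Γ q 1 0 1) 1 p = 0 ∧
      pd (fun q => Γ q 1 0 2) 1 p * Real.sin (p 1) = Real.cos (p 1) * Γ p 1 0 2 := by
    intro p hp h2
    have hs1 : Real.sin (p 1) ≠ 0 := ne_of_gt (Real.sin_pos_of_pos_of_lt_pi hp.2.1.1 hp.2.1.2)
    have hZ000 := hζ p hp 0 0 0
    have hZ011 := hζ p hp 0 1 1
    have hZ101 := hζ p hp 1 0 1
    have hZ102 := hζ p hp 1 0 2
    simp only [Fin.sum_univ_three, Matrix.cons_val_zero, Matrix.cons_val_one,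
      Matrix.head_cons, Matrix.cons_val_two, Matrix.tail_cons] at hZ000 hZ011 hZ101 hZ102
    simp only [pd_constFn, pd_cos2, pd_negsin2, pd_negcos2, pd_lam2 p hs1, pd_zet2 p hs1,
      sd_lam2_0 p hs1, sd_lam2_1 p hs1, sd_lam2_2 p hs1, pd_invsin2sin p hs1,
      hpd2 p hp] at hZ000 hZ011 hZ101 hZ102
    rw [h2] at hZ000 hZ011 hZ101 hZ102
    simp [h2] at hZ000 hZ011 hZ101 hZ102
    refine ⟨hZ000, hZ011, hZ101, ?_⟩
    have h0 : Real.cos (p 1) / Real.sin (p 1) * Γ p 1 0 2 +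
        -pd (fun q => Γ q 1 0 2) 1 p = 0 := hZ102
    field_simp at h0
    linarith
  -- ϑ-independence helper
  have hϑconst : ∀ (i j k : Fin 3),
      (∀ x, x ∈ sphDom → x 2 = Real.pi/2 → pd (fun q => Γ q i j k) 1 x = 0) →
      ∀ p : Fin 3 → ℝ, p ∈ sphDom → p 2 = Real.pi/2 →
        Γ p i j k = Γ ![p 0, Real.pi/2, Real.pi/2] i j k := by
    intro i j k hz p hp h2
    have hq : (![p 0, Real.pi/2, Real.pi/2] : Fin 3 → ℝ) ∈ sphDom := mem_mk hp.1 hhθ hhφ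
    refine const_coord (fun q => Γ q i j k) 1 (fun x hx _ => hdiff i j k x hx)
      (fun x hx hag => hz x hx (by rw [hag 2 (by decide), h2])) hp hq ?_
    intro l hl
    fin_cases l
    · simp
    · exact absurd (by decide) hl
    · simp [h2]
  -- the quotient Γ¹₀₂ / sin ϑ is constant in ϑ on the slice
  have hinvdiff : ∀ x : Fin 3 → ℝ, Real.sin (x 1) ≠ 0 →
      DifferentiableAt ℝ (fun q : Fin 3 → ℝ => (Real.sin (q 1))⁻¹) x := by
    intro x hsx
    have h : HasFDerivAt (fun q : Fin 3 → ℝ => (Real.sin (q 1))⁻¹)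
        ((-Real.cos (x 1) / Real.sin (x 1) ^ 2) • (proj3 1 : (Fin 3 → ℝ) →L[ℝ] ℝ)) x :=
      by have h' := ((Real.hasDerivAt_sin (x 1)).fun_inv hsx).comp_hasFDerivAt x (hasFDerivAt_coord 1 x); exact h'
    exact h.differentiableAt
  have hF0 : ∀ x, x ∈ sphDom → x 2 = Real.pi/2 →
      pd (fun q => Γ q 1 0 2 * (Real.sin (q 1))⁻¹) 1 x = 0 := by
    intro x hx h2
    have hsx : Real.sin (x 1) ≠ 0 := ne_of_gt (Real.sin_pos_of_pos_of_lt_pi hx.2.1.1 hx.2.1.2)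
    rw [pd_mul (hdiff 1 0 2 x hx) (hinvdiff x hsx)]
    have h1 : pd (fun q : Fin 3 → ℝ => (Real.sin (q 1))⁻¹) 1 x
        = -Real.cos (x 1) / Real.sin (x 1) ^ 2 := by
      have := pd_comp1 ((Real.hasDerivAt_sin (x 1)).fun_inv hsx) (p := x) 1
      simpa using this
    rw [h1]
    have h4 := (hZfacts x hx h2).2.2.2
    field_simp
    linear_combination h4
  -- choose the radial profile functions
  refine ⟨fun r => Γ ![r, Real.pi/2, Real.pi/2] 0 0 0,
          fun r => Γ ![r, Real.pi/2, Real.pi/2] 0 1 1,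
          fun r => Γ ![r, Real.pi/2, Real.pi/2] 1 0 1,
          fun r => Γ ![r, Real.pi/2, Real.pi/2] 1 0 2, ?_⟩
  intro p hp
  have hs1 : Real.sin (p 1) ≠ 0 := ne_of_gt (Real.sin_pos_of_pos_of_lt_pi hp.2.1.1 hp.2.1.2)
  have hP1mem : (![p 0, p 1, Real.pi/2] : Fin 3 → ℝ) ∈ sphDom := mem_mk hp.1 hp.2.1 hhφ
  have hP12 : (![p 0, p 1, Real.pi/2] : Fin 3 → ℝ) 2 = Real.pi/2 := by simp
  have hP11 : (![p 0, p 1, Real.pi/2] : Fin 3 → ℝ) 1 = p 1 := by simp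
  have hP10 : (![p 0, p 1, Real.pi/2] : Fin 3 → ℝ) 0 = p 0 := by simp
  have hP2mem : (![p 0, Real.pi/2, Real.pi/2] : Fin 3 → ℝ) ∈ sphDom := mem_mk hp.1 hhθ hhφ
  have hP21 : (![p 0, Real.pi/2, Real.pi/2] : Fin 3 → ℝ) 1 = Real.pi/2 := by simp
  obtain ⟨s1, s2, s3, s4, s5, s6, s7, s8, s9, s10, s11, s12, s13⟩ :=
    hslice ![p 0, p 1, Real.pi/2] hP1mem hP12
  rw [hP11] at s9 s10 s11 s13
  -- ϑ-transfers for the r-profiles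
  have u000 : Γ ![p 0, p 1, Real.pi/2] 0 0 0 = Γ ![p 0, Real.pi/2, Real.pi/2] 0 0 0 := by
    have h := hϑconst 0 0 0 (fun x hx h2 => (hZfacts x hx h2).1)
      ![p 0, p 1, Real.pi/2] hP1mem hP12
    rwa [hP10] at h
  have u011 : Γ ![p 0, p 1, Real.pi/2] 0 1 1 = Γ ![p 0, Real.pi/2, Real.pi/2] 0 1 1 := by
    have h := hϑconst 0 1 1 (fun x hx h2 => (hZfacts x hx h2).2.1)
      ![p 0, p 1, Real.pi/2] hP1mem hP12
    rwa [hP10] at h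
  have u101 : Γ ![p 0, p 1, Real.pi/2] 1 0 1 = Γ ![p 0, Real.pi/2, Real.pi/2] 1 0 1 := by
    have h := hϑconst 1 0 1 (fun x hx h2 => (hZfacts x hx h2).2.2.1)
      ![p 0, p 1, Real.pi/2] hP1mem hP12
    rwa [hP10] at h
  -- ϑ-transfer for the quotient Γ¹₀₂/sin ϑ
  have u102 : Γ ![p 0, p 1, Real.pi/2] 1 0 2
      = Γ ![p 0, Real.pi/2, Real.pi/2] 1 0 2 * Real.sin (p 1) := by
    have h := const_coord (fun q => Γ q 1 0 2 * (Real.sin (q 1))⁻¹) 1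
      (fun x hx _ => (hdiff 1 0 2 x hx).mul (hinvdiff x
        (ne_of_gt (Real.sin_pos_of_pos_of_lt_pi hx.2.1.1 hx.2.1.2))))
      (fun x hx hag => hF0 x hx (by rw [hag 2 (by decide), hP12]))
      hP1mem hP2mem ?_
    · simp only [hP11, hP21] at h
      simp only [Real.sin_pi_div_two, inv_one, mul_one] at h
      have := h
      field_simp at this
      linarith [this]
    · intro l hl
      fin_cases l
      · simp
      · exact absurd (by decide) hl
      · simp
  -- assemble the seventeen conclusions
  refine ⟨(hφconst 0 0 1 p hp).trans s1, (hφconst 0 0 2 p hp).trans s2,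
          (hφconst 1 0 0 p hp).trans s3, (hφconst 1 1 1 p hp).trans s4,
          (hφconst 1 1 2 p hp).trans s5, (hφconst 2 0 0 p hp).trans s6,
          (hφconst 2 1 1 p hp).trans s7, (hφconst 2 2 2 p hp).trans s8,
          (hφconst 0 0 0 p hp).trans u000, (hφconst 0 1 1 p hp).trans u011,
          (hφconst 1 0 1 p hp).trans u101, ?_, ?_, ?_, ?_, ?_, ?_⟩
  · rw [hφconst 0 2 2 p hp, s9, u011]
  · rw [hφconst 1 2 2 p hp, s10]
  · rw [hφconst 2 1 2 p hp, s11]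
  · rw [hφconst 2 0 2 p hp, s12, u101]
  · rw [hφconst 1 0 2 p hp, u102]
  · rw [hφconst 2 0 1 p hp, s13, u102]
    field_simp
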